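/- Let F(u) = (1/2)e^u for u ≤ 0 and 1 - (1/2)e^{-u} for u > 0 (the standard Laplace CDF), Lσ(u) = -σ log(1 - F(u/σ)), s(σ|d) = (d/2)/(d/2 + σ log 2), and CLσ(u|d) = s(σ|d)(Lσ(u) - u - Lσ(d-u)) + (d/2)(1 + s(σ|d)). Then for all u ∈ [0,d] and σ > 0, CLσ(u|d) = s(σ|d)·u + (d/2)(1 - s(σ|d)), i.e., CLσ(·|d) is affine-linear on [0,d]. -/
import Mathlib


noncomputable def F (u : ℝ) : ℝ := if u ≤ 0 then Real.exp u / 2 else 1 - Real.exp (-u) / 2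

noncomputable def L (σ u : ℝ) : ℝ := -σ * Real.log (1 - F (u / σ))

noncomputable def s (σ d : ℝ) : ℝ := (d / 2) / (d / 2 + σ * Real.log 2)

noncomputable def CL (σ d u : ℝ) : ℝ :=
  s σ d * (L σ u - u - L σ (d - u)) + d / 2 * (1 + s σ d)

lemma Lval (σ : ℝ) (hσ : 0 < σ) (u : ℝ) (hu : 0 ≤ u) :
    L σ u = u + σ * Real.log 2 := by
  rcases eq_or_lt_of_le hu with h | h
  · subst h
    simp [L, F]
    rw [show (1:ℝ) - 2⁻¹ = 2⁻¹ by norm_num, Real.log_inv]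
    ring
  · have hpos : 0 < u / σ := div_pos h hσ
    have hne : ¬ (u / σ ≤ 0) := not_le.mpr hpos
    rw [L, F, if_neg hne]
    have : 1 - (1 - Real.exp (-(u / σ)) / 2) = Real.exp (-(u / σ)) / 2 := by ring
    rw [this, Real.log_div (Real.exp_ne_zero _) two_ne_zero, Real.log_exp]
    field_simp
    ring

theorem stmt13 (d : ℝ) (hd : 0 < d) (σ : ℝ) (hσ : 0 < σ)
    (u : ℝ) (hu : u ∈ Set.Icc (0 : ℝ) d) :
    CL σ d u = s σ d * u + d / 2 * (1 - s σ d) := by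
  obtain ⟨h0, h1⟩ := hu
  rw [CL, Lval σ hσ u h0, Lval σ hσ (d - u) (by linarith)]
  ring
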